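/- Let S and U be countable types, f : S → U a function, size : U → ℕ, and x > 0 a real number such that Z := ∑'_{u : U} x^(size u) satisfies 0 < Z < ∞. Assume that for every u : U the fiber f⁻¹({u}) is finite and has exactly (size u)! elements. Then ∑'_{s : S} x^(size (f s)) / (size (f s))! = Z, and the pushforward under f of the probability mass function on S given by s ↦ x^(size (f s)) / ((size (f s))! · Z) equals the probability mass function on U given by u ↦ x^(size u) / Z. -/

import Mathlib

/-- Fiber tsum of a constant-valued-on-fiber function. -/
lemma fiber_tsum {S U : Type*} (f : S → U) (u : U)
    (hfin : (f ⁻¹' {u}).Finite) (g : U → ℝ) :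
    ∑' s : (f ⁻¹' {u}), g (f (s : S)) = (Nat.card (f ⁻¹' {u})) • g u := by
  have h1 : ∀ s : (f ⁻¹' {u}), g (f (s : S)) = g u := by
    rintro ⟨s, hs⟩
    simp only [Set.mem_preimage, Set.mem_singleton_iff] at hs
    simp [hs]
  have : Finite (f ⁻¹' {u}) := hfin
  rw [tsum_congr h1, tsum_const]

/-- Pólya–Boltzmann samplers extend ordinary Boltzmann samplers: if each
unlabeled structure `u` (of size `size u`) has exactly `(size u)!` preimages
(symmetries) under `f`, then the symmetry weights `x^size/(size)!` sum to
`Z = ∑ x^(size u)`, and the pushforward under `f` of the normalized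
symmetry distribution is the ordinary Boltzmann distribution. -/
theorem stmt_0 {S U : Type*} [Countable S] [Countable U]
    (f : S → U) (size : U → ℕ) (x : ℝ) (hx : 0 < x)
    (hsum : Summable fun u : U => x ^ size u)
    (hZpos : 0 < ∑' u : U, x ^ size u)
    (hfin : ∀ u : U, (f ⁻¹' {u}).Finite)
    (hcard : ∀ u : U, Nat.card (f ⁻¹' {u}) = (size u).factorial) :
    (∑' s : S, x ^ size (f s) / ((size (f s)).factorial : ℝ) = ∑' u : U, x ^ size u) ∧
    (∀ u : U,
      ∑' s : (f ⁻¹' {u}),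
          x ^ size (f (s : S)) / (((size (f (s : S))).factorial : ℝ) * ∑' v : U, x ^ size v)
        = x ^ size u / ∑' v : U, x ^ size v) := by
  set Z := ∑' v : U, x ^ size v with hZ
  have hfiber : ∀ (g : U → ℝ) (u : U),
      ∑' s : (f ⁻¹' {u}), g (f (s : S)) = ((size u).factorial : ℝ) * g u := by
    intro g u
    rw [fiber_tsum f u (hfin u) g, ← hcard u, nsmul_eq_mul]
  constructor
  · -- sum over S equals Z
    set g : U → ℝ := fun u => x ^ size u / ((size u).factorial : ℝ) with hg
    have hkey : ∀ u : U, ∑' s : (f ⁻¹' {u}), g (f (s : S)) = x ^ size u := by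
      intro u
      rw [hfiber g u, hg]
      field_simp
    have hnonneg : ∀ s : S, 0 ≤ g (f s) := by
      intro s
      positivity
    -- use sigma fiber equiv
    have hsig : Summable fun p : Σ u : U, (f ⁻¹' {u}) => g (f (p.2 : S)) := by
      have := (summable_sigma_of_nonneg (f := fun p : Σ u : U, (f ⁻¹' {u}) =>
        g (f (p.2 : S))) (fun p => by positivity)).2
      refine this ⟨fun u => ?_, ?_⟩
      · have : Finite (f ⁻¹' {u}) := hfin u
        exact Summable.of_finite
      · apply hsum.congr
        intro u
        exact (hkey u).symm
    calc ∑' s : S, g (f s)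
        = ∑' p : (Σ u : U, (f ⁻¹' {u})), g (f (p.2 : S)) :=
          ((Equiv.sigmaFiberEquiv f).tsum_eq _).symm
      _ = ∑' u : U, ∑' s : (f ⁻¹' {u}), g (f (s : S)) := by
          exact Summable.tsum_sigma' (fun u => have : Finite (f ⁻¹' {u}) := hfin u
            Summable.of_finite) hsig
      _ = ∑' u : U, x ^ size u := tsum_congr hkey
  · intro u
    have := hfiber (fun v => x ^ size v / (((size v).factorial : ℝ) * Z)) u
    rw [this]
    have hfac : ((size u).factorial : ℝ) ≠ 0 := by positivity
    field_simp
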